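/- Let p ≥ 3 be a prime. Define the complex matrix C'' of size p(p−1) × p³ whose rows are indexed by pairs (φ, γ) with φ ∈ ZMod p \ {−1} and γ ∈ ZMod p, and whose columns are indexed by triples (a, b, c) ∈ (ZMod p)³, with entries C''((φ,γ), (a,b,c)) = (1/√(p(p−1)))·e_p(γ·(a·φ + c) + b·φ). Then every column of C'' is a unit vector in ℂ^{p(p−1)}, and the coherence of C'' equals 1/(p−1). -/

import Mathlib

open scoped ComplexInnerProductSpace

/-- The canonical additive character of `ZMod p`: `ep p x = exp(2πi·x̂/p)`. -/
noncomputable def ep (p : ℕ) (x : ZMod p) : ℂ :=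
  Complex.exp (2 * Real.pi * Complex.I * (x.val : ℂ) / (p : ℂ))

lemma ep_eq (p : ℕ) [NeZero p] (x : ZMod p) : ep p x = ZMod.stdAddChar x := by
  have h := ZMod.stdAddChar_coe (N := p) (x.val : ℤ)
  have h2 : (((x.val : ℤ) : ZMod p)) = x := by
    push_cast
    exact ZMod.natCast_rightInverse x
  rw [h2] at h
  rw [ep, h]
  push_cast
  ring_nf

lemma ep_norm (p : ℕ) [NeZero p] (x : ZMod p) : ‖ep p x‖ = 1 := by
  rw [ep, Complex.norm_exp]
  simp [Complex.div_re, -ZMod.natCast_val]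

lemma ep_add (p : ℕ) [NeZero p] (x y : ZMod p) : ep p (x + y) = ep p x * ep p y := by
  simp [ep_eq, AddChar.map_add_eq_mul]

lemma ep_conj (p : ℕ) [NeZero p] (x : ZMod p) :
    (starRingEnd ℂ) (ep p x) = ep p (-x) := by
  have h1 : ep p x * ep p (-x) = 1 := by
    rw [← ep_add]; simp [ep]
  have h2 : (ep p x)⁻¹ = ep p (-x) := (eq_inv_of_mul_eq_one_right h1).symm
  rw [← h2, Complex.inv_eq_conj (by simpa using ep_norm p x)]

lemma ep_sum (p : ℕ) [NeZero p] (t : ZMod p) :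
    ∑ γ : ZMod p, ep p (γ * t) = if t = 0 then (p : ℂ) else 0 := by
  simp_rw [ep_eq]
  have := AddChar.sum_mulShift (ψ := ZMod.stdAddChar (N := p)) t (ZMod.isPrimitive_stdAddChar p)
  rw [ZMod.card] at this; rw [this]; split <;> simp

lemma sum_subtype_ep (p : ℕ) [NeZero p] (d : ZMod p) (hd : d ≠ 0) :
    ∑ φ : {φ : ZMod p // φ ≠ -1}, ep p (d * (φ : ZMod p)) = - ep p (d * (-1)) := by
  have h1 : ∑ φ ∈ Finset.univ.erase (-1 : ZMod p), ep p (d * φ) =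
      ∑ φ : {φ : ZMod p // φ ≠ -1}, ep p (d * (φ : ZMod p)) := by
    apply Finset.sum_subtype
    intro x
    simp
  have h2 : ∑ φ ∈ Finset.univ.erase (-1 : ZMod p), ep p (d * φ) + ep p (d * (-1)) =
      ∑ φ : ZMod p, ep p (d * φ) :=
    Finset.sum_erase_add _ _ (Finset.mem_univ _)
  have h3 : ∑ φ : ZMod p, ep p (d * φ) = 0 := by
    simp_rw [mul_comm d]
    rw [ep_sum]
    simp [hd]
  rw [← h1]
  linear_combination h2 + h3

lemma inner_v (p : ℕ) [NeZero p] (hp3 : 3 ≤ p)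
    (v : ZMod p × ZMod p × ZMod p →
      EuclideanSpace ℂ ({φ : ZMod p // φ ≠ -1} × ZMod p))
    (hv : ∀ a b c : ZMod p, v (a, b, c) =
      WithLp.toLp 2 (fun φγ => ((1 / Real.sqrt (p * (p - 1)) : ℝ) : ℂ) *
        ep p (φγ.2 * (a * (φγ.1 : ZMod p) + c) + b * (φγ.1 : ZMod p))))
    (a b c a' b' c' : ZMod p) :
    ⟪v (a, b, c), v (a', b', c')⟫ = (1 / ((p : ℂ) - 1)) *
      ∑ φ : {φ : ZMod p // φ ≠ -1},
        if (a' - a) * (φ : ZMod p) + (c' - c) = 0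
        then ep p ((b' - b) * (φ : ZMod p)) else 0 := by
  have hppos : (0:ℝ) < p := by positivity
  have hp1 : (3:ℝ) ≤ p := by exact_mod_cast hp3
  have hx : (0:ℝ) ≤ (p : ℝ) * ((p : ℝ) - 1) := by nlinarith
  set c₀ : ℝ := 1 / Real.sqrt (p * (p - 1)) with hc₀
  have hsq : (c₀ : ℂ)^2 = ((1 / ((p : ℝ) * ((p : ℝ) - 1)) : ℝ) : ℂ) := by
    rw [← Complex.ofReal_pow]
    congr 1
    rw [hc₀, div_pow, one_pow, Real.sq_sqrt hx]
  rw [hv, hv, PiLp.inner_apply]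
  simp only [PiLp.toLp_apply]
  have key : ∀ (i : {φ : ZMod p // φ ≠ -1} × ZMod p),
      ⟪((c₀ : ℂ) * ep p (i.2 * (a * (i.1 : ZMod p) + c) + b * (i.1 : ZMod p))),
        ((c₀ : ℂ) * ep p (i.2 * (a' * (i.1 : ZMod p) + c') + b' * (i.1 : ZMod p)))⟫ =
      (c₀ : ℂ)^2 * (ep p ((b' - b) * (i.1 : ZMod p)) *
        ep p (i.2 * ((a' - a) * (i.1 : ZMod p) + (c' - c)))) := by
    intro i
    rw [RCLike.inner_apply, map_mul, Complex.conj_ofReal, ep_conj]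
    have harg : -(i.2 * (a * (i.1 : ZMod p) + c) + b * (i.1 : ZMod p)) +
        (i.2 * (a' * (i.1 : ZMod p) + c') + b' * (i.1 : ZMod p)) =
        ((b' - b) * (i.1 : ZMod p)) + (i.2 * ((a' - a) * (i.1 : ZMod p) + (c' - c))) := by
      ring
    have h2 : ep p (-(i.2 * (a * (i.1 : ZMod p) + c) + b * (i.1 : ZMod p))) *
        ep p (i.2 * (a' * (i.1 : ZMod p) + c') + b' * (i.1 : ZMod p)) =
        ep p ((b' - b) * (i.1 : ZMod p)) *
          ep p (i.2 * ((a' - a) * (i.1 : ZMod p) + (c' - c))) := by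
      rw [← ep_add, ← ep_add, harg]
    rw [mul_mul_mul_comm, ← sq, ← h2]
    ring
  simp_rw [key]
  rw [Fintype.sum_prod_type]
  have inner_sum : ∀ φ : {φ : ZMod p // φ ≠ -1},
      ∑ γ : ZMod p, (c₀ : ℂ)^2 * (ep p ((b' - b) * (φ : ZMod p)) *
        ep p (γ * ((a' - a) * (φ : ZMod p) + (c' - c)))) =
      (1 / ((p : ℂ) - 1)) *
        (if (a' - a) * (φ : ZMod p) + (c' - c) = 0
         then ep p ((b' - b) * (φ : ZMod p)) else 0) := by
    intro φ
    rw [← Finset.mul_sum, ← Finset.mul_sum, ep_sum]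
    rw [hsq]
    have hpc : (p : ℂ) ≠ 0 := by exact_mod_cast hppos.ne'
    have hpc1 : (p : ℂ) - 1 ≠ 0 := by
      intro h
      have h1 : (p : ℂ) = 1 := by linear_combination h
      have h2 : (p : ℝ) = 1 := by exact_mod_cast h1
      linarith [hp1, h2]
    split_ifs with h
    · push_cast
      field_simp
    · simp
  rw [Finset.sum_congr rfl (fun φ _ => inner_sum φ), ← Finset.mul_sum]

theorem stmt6 (p : ℕ) (hp : p.Prime) (hp3 : 3 ≤ p) [NeZero p]
    (v : ZMod p × ZMod p × ZMod p →
      EuclideanSpace ℂ ({φ : ZMod p // φ ≠ -1} × ZMod p))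
    (hv : ∀ a b c : ZMod p, v (a, b, c) =
      WithLp.toLp 2 (fun φγ => ((1 / Real.sqrt (p * (p - 1)) : ℝ) : ℂ) *
        ep p (φγ.2 * (a * (φγ.1 : ZMod p) + c) + b * (φγ.1 : ZMod p)))) :
    (∀ q, ‖v q‖ = 1) ∧
    (∀ q q', q ≠ q' → ‖⟪v q, v q'⟫‖ ≤ 1 / ((p : ℝ) - 1)) ∧
    (∃ q q', q ≠ q' ∧ ‖⟪v q, v q'⟫‖ = 1 / ((p : ℝ) - 1)) := by
  haveI := Fact.mk hp
  have hp1 : (3:ℝ) ≤ p := by exact_mod_cast hp3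
  have hpc1 : (p : ℂ) - 1 ≠ 0 := by
    intro h
    have h1 : (p : ℂ) = 1 := by linear_combination h
    have h2 : (p : ℝ) = 1 := by exact_mod_cast h1
    linarith
  have hnorm : ‖(1 / ((p:ℂ) - 1))‖ = 1 / ((p:ℝ) - 1) := by
    have h : ((p:ℂ) - 1) = (((p:ℝ) - 1 : ℝ) : ℂ) := by push_cast; ring
    rw [norm_div, norm_one, h, Complex.norm_real, Real.norm_eq_abs, abs_of_nonneg (by linarith)]
  have hcard : (Fintype.card {φ : ZMod p // φ ≠ -1} : ℂ) = (p : ℂ) - 1 := by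
    rw [show (fun φ : ZMod p => φ ≠ -1) = (fun φ : ZMod p => ¬ (φ = -1)) from rfl] at *
    rw [Fintype.card_subtype_compl, Fintype.card_subtype_eq, ZMod.card]
    have : 1 ≤ p := by omega
    push_cast [Nat.cast_sub this]
    ring
  refine ⟨?_, ?_, ?_⟩
  · rintro ⟨a, b, c⟩
    have h := inner_v p hp3 v hv a b c a b c
    simp only [sub_self, zero_mul, zero_add, if_true] at h
    have h0 : ep p ((0 : ZMod p)) = 1 := by simp [ep]
    simp only [h0, Finset.sum_const, Finset.card_univ, nsmul_eq_mul, mul_one] at h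
    have hinner : ⟪v (a,b,c), v (a,b,c)⟫ = 1 := by
      rw [h, hcard]
      field_simp
    have hns2 : ‖v (a,b,c)‖^2 = 1 := by
      have hre := inner_self_eq_norm_sq (𝕜 := ℂ) (v (a,b,c))
      rw [hinner] at hre
      simpa using hre.symm
    nlinarith [norm_nonneg (v (a,b,c))]
  · rintro ⟨a, b, c⟩ ⟨a', b', c'⟩ hne
    rw [inner_v p hp3 v hv a b c a' b' c', norm_mul, hnorm]
    have hS : ‖∑ φ : {φ : ZMod p // φ ≠ -1},
        if (a' - a) * (φ : ZMod p) + (c' - c) = 0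
        then ep p ((b' - b) * (φ : ZMod p)) else 0‖ ≤ 1 := by
      by_cases hda : a' - a = 0
      · by_cases hdc : c' - c = 0
        · have hdb : b' - b ≠ 0 := by
            intro hdb
            apply hne
            rw [sub_eq_zero] at hda hdb hdc
            simp [hda.symm, hdb.symm, hdc.symm]
          simp only [hda, hdc, zero_mul, add_zero, if_true]
          rw [sum_subtype_ep p _ hdb]
          rw [norm_neg, ep_norm]
        · have : ∀ φ : {φ : ZMod p // φ ≠ -1},
              ((a' - a) * (φ : ZMod p) + (c' - c) = 0) = False := by
            intro φ
            simp [hda, hdc]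
          simp only [hda, zero_mul, zero_add, hdc, if_false]
          simp
      · calc ‖∑ φ : {φ : ZMod p // φ ≠ -1},
              if (a' - a) * (φ : ZMod p) + (c' - c) = 0
              then ep p ((b' - b) * (φ : ZMod p)) else 0‖
            ≤ ∑ φ : {φ : ZMod p // φ ≠ -1},
              ‖if (a' - a) * (φ : ZMod p) + (c' - c) = 0
               then ep p ((b' - b) * (φ : ZMod p)) else 0‖ := norm_sum_le _ _
          _ = ∑ φ : {φ : ZMod p // φ ≠ -1},
              (if (a' - a) * (φ : ZMod p) + (c' - c) = 0 then (1:ℝ) else 0) := by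
              apply Finset.sum_congr rfl
              intro φ _
              rw [apply_ite norm, ep_norm, norm_zero]
          _ = ((Finset.univ.filter (fun φ : {φ : ZMod p // φ ≠ -1} =>
              (a' - a) * (φ : ZMod p) + (c' - c) = 0)).card : ℝ) := by
              rw [Finset.sum_boole]
          _ ≤ 1 := by
              have hc : (Finset.univ.filter (fun φ : {φ : ZMod p // φ ≠ -1} =>
                  (a' - a) * (φ : ZMod p) + (c' - c) = 0)).card ≤ 1 := by
                apply Finset.card_le_one.mpr
                intro x hx y hy
                simp only [Finset.mem_filter] at hx hy
                apply Subtype.ext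
                have hxy : (a' - a) * (x : ZMod p) = (a' - a) * (y : ZMod p) := by
                  have := hx.2
                  have := hy.2
                  linear_combination hx.2 - hy.2
                exact mul_left_cancel₀ hda hxy
              exact_mod_cast hc
    have hfac : (0:ℝ) ≤ 1 / ((p:ℝ) - 1) := div_nonneg (by norm_num) (by linarith)
    have hmul := mul_le_mul_of_nonneg_left hS hfac
    simpa using hmul
  · refine ⟨(0, 0, 0), (0, 1, 0), ?_, ?_⟩
    · intro h
      have h1 : (0 : ZMod p) = 1 := congrArg (fun q : ZMod p × ZMod p × ZMod p => q.2.1) h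
      exact zero_ne_one h1
    · rw [inner_v p hp3 v hv 0 0 0 0 1 0]
      simp only [sub_zero, sub_self, zero_mul, zero_add, if_true]
      rw [sum_subtype_ep p 1 one_ne_zero]
      rw [norm_mul, hnorm, norm_neg, ep_norm, mul_one]
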